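/- Let φ be a 3-CNF formula with variables x_1,…,x_N and clauses C_1,…,C_M, each clause containing at most three literals. Set α = N + 3M and U = {1,…,2N+3M}, and for each i ∈ {1,…,N} define T_i = {α−i+1, α+i} ∪ {3j : x_i ∈ C_j} ∪ {3j−1 : ¬x_i ∈ C_j} and F_i = {α−i+1, α+i} ∪ {3j : ¬x_i ∈ C_j} ∪ {3j−1 : x_i ∈ C_j}. Suppose R is a set of indices into the family (T_1,…,T_N, F_1,…,F_N) with |R| ≤ N such that there is a surjection f from the disjoint union of the selected sets onto U with f((v,i)) ≤ v for every element (v,i). Then for every i ∈ {1,…,N}, R selects exactly one of T_i and F_i. -/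

import Mathlib

/-- The set `T_i = {α−i+1, α+i} ∪ {3j : x_i ∈ C_j} ∪ {3j−1 : ¬x_i ∈ C_j}` where `α = N+3M`;
here `i : Fin N` stands for the 1-based variable index `i+1`, and `j : Fin M` for the 1-based
clause index `j+1` (so `3j` becomes `3*j.val+3` and `3j−1` becomes `3*j.val+2`). -/
def Tset {N M : ℕ} (C : Fin M → Finset (Bool × Fin N)) (i : Fin N) : Finset ℕ :=
  {N + 3*M - i.val, N + 3*M + i.val + 1} ∪
  ((Finset.univ.filter fun j : Fin M => (true, i) ∈ C j).image fun j => 3*j.val + 3) ∪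
  ((Finset.univ.filter fun j : Fin M => (false, i) ∈ C j).image fun j => 3*j.val + 2)

/-- The set `F_i = {α−i+1, α+i} ∪ {3j : ¬x_i ∈ C_j} ∪ {3j−1 : x_i ∈ C_j}` where `α = N+3M`. -/
def Fset {N M : ℕ} (C : Fin M → Finset (Bool × Fin N)) (i : Fin N) : Finset ℕ :=
  {N + 3*M - i.val, N + 3*M + i.val + 1} ∪
  ((Finset.univ.filter fun j : Fin M => (false, i) ∈ C j).image fun j => 3*j.val + 3) ∪
  ((Finset.univ.filter fun j : Fin M => (true, i) ∈ C j).image fun j => 3*j.val + 2)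


/-- the variable index selected -/
def skey {N : ℕ} : (Fin N ⊕ Fin N) → ℕ := Sum.elim Fin.val Fin.val

lemma skey_lt {N : ℕ} (idx : Fin N ⊕ Fin N) : skey idx < N := by
  cases idx <;> exact Fin.is_lt _

lemma Tset_filter_subset {N M : ℕ} (C : Fin M → Finset (Bool × Fin N)) (k : Fin N)
    (t : ℕ) (ht : 3*M < t) :
    (Tset C k).filter (fun v => t ≤ v) ⊆ ({N + 3*M - k.val, N + 3*M + k.val + 1} : Finset ℕ).filter (fun v => t ≤ v) := by
  intro v hv
  simp only [Tset, Finset.mem_filter, Finset.mem_union, Finset.mem_image,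
    Finset.mem_insert, Finset.mem_singleton] at hv ⊢
  obtain ⟨h, htv⟩ := hv
  refine ⟨?_, htv⟩
  rcases h with (h | ⟨j, _, hj⟩) | ⟨j, _, hj⟩
  · exact h
  · exact absurd hj (by have := j.isLt; omega)
  · exact absurd hj (by have := j.isLt; omega)

lemma Fset_filter_subset {N M : ℕ} (C : Fin M → Finset (Bool × Fin N)) (k : Fin N)
    (t : ℕ) (ht : 3*M < t) :
    (Fset C k).filter (fun v => t ≤ v) ⊆ ({N + 3*M - k.val, N + 3*M + k.val + 1} : Finset ℕ).filter (fun v => t ≤ v) := by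
  intro v hv
  simp only [Fset, Finset.mem_filter, Finset.mem_union, Finset.mem_image,
    Finset.mem_insert, Finset.mem_singleton] at hv ⊢
  obtain ⟨h, htv⟩ := hv
  refine ⟨?_, htv⟩
  rcases h with (h | ⟨j, _, hj⟩) | ⟨j, _, hj⟩
  · exact h
  · exact absurd hj (by have := j.isLt; omega)
  · exact absurd hj (by have := j.isLt; omega)

lemma pair_filter_card (a b : ℕ) (p : ℕ → Prop) [DecidablePred p] :
    (({a, b} : Finset ℕ).filter p).card ≤ (if p a then 1 else 0) + (if p b then 1 else 0) := by
  by_cases ha : p a <;> by_cases hb : p b <;>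
    simp [Finset.filter_insert, Finset.filter_singleton, ha, hb] <;>
    exact (Finset.card_insert_le _ _).trans (by simp)

open Finset in
lemma count_lemma {N M : ℕ} (C : Fin M → Finset (Bool × Fin N)) (hN : 0 < N)
    (R : Finset (Fin N ⊕ Fin N))
    (f : {p : ℕ × (Fin N ⊕ Fin N) // p.2 ∈ R ∧ p.1 ∈ Sum.elim (Tset C) (Fset C) p.2} →
      {u : ℕ // u ∈ Finset.Icc 1 (2*N + 3*M)})
    (hsurj : Function.Surjective f)
    (hle : ∀ p, (f p : ℕ) ≤ p.1.1)
    (t : ℕ) (ht : 3*M < t) :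
    (Finset.Icc t (2*N + 3*M)).card ≤
      (R.filter (fun idx => t ≤ N + 3*M - skey idx)).card +
      (R.filter (fun idx => t ≤ N + 3*M + skey idx + 1)).card := by
  classical
  set Dom : Finset (ℕ × (Fin N ⊕ Fin N)) :=
    R.biUnion (fun idx =>
      ((Sum.elim (Tset C) (Fset C) idx).filter (fun v => t ≤ v)).image (fun v => (v, idx)))
    with hDom
  have step1 : (Finset.Icc t (2*N + 3*M)).card ≤ Dom.card := by
    apply Finset.card_le_card_of_injOn
      (fun u => if h : u ∈ Finset.Icc 1 (2*N + 3*M)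
        then (Function.surjInv hsurj ⟨u, h⟩).1 else (0, Sum.inl ⟨0, hN⟩))
    · intro u hu
      have hu' : u ∈ Finset.Icc 1 (2*N + 3*M) := by
        simp only [Finset.mem_Icc, Finset.coe_Icc, Set.mem_Icc, Finset.mem_coe] at hu ⊢; omega
      simp only [hu', dif_pos]
      set p := Function.surjInv hsurj ⟨u, hu'⟩ with hp
      have hfp : f p = ⟨u, hu'⟩ := Function.surjInv_eq hsurj _
      have hup : u ≤ p.1.1 := by
        have := hle p
        rw [hfp] at this
        exact this
      have htu : t ≤ u := (Finset.mem_Icc.mp hu).1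
      rw [hDom]
      apply Finset.mem_biUnion.mpr
      refine ⟨p.1.2, p.2.1, ?_⟩
      apply Finset.mem_image.mpr
      exact ⟨p.1.1, Finset.mem_filter.mpr ⟨p.2.2, le_trans htu hup⟩, rfl⟩
    · intro u1 hu1 u2 hu2 heq
      simp only [Finset.coe_Icc, Set.mem_Icc] at hu1 hu2
      have hu1' : u1 ∈ Finset.Icc 1 (2*N + 3*M) := by
        simp only [Finset.mem_Icc]; omega
      have hu2' : u2 ∈ Finset.Icc 1 (2*N + 3*M) := by
        simp only [Finset.mem_Icc]; omega
      simp only [hu1', hu2', dif_pos] at heq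
      have hpeq : Function.surjInv hsurj ⟨u1, hu1'⟩ = Function.surjInv hsurj ⟨u2, hu2'⟩ :=
        Subtype.ext heq
      have := congrArg f hpeq
      rw [Function.surjInv_eq hsurj, Function.surjInv_eq hsurj] at this
      exact congrArg Subtype.val this
  have step2 : Dom.card = ∑ idx ∈ R,
      ((Sum.elim (Tset C) (Fset C) idx).filter (fun v => t ≤ v)).card := by
    rw [hDom, Finset.card_biUnion]
    · apply Finset.sum_congr rfl
      intro idx _
      exact Finset.card_image_of_injective _ (fun a b hab => (Prod.mk.injEq _ _ _ _ ▸ hab).1)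
    · intro x _ y _ hxy
      simp only [Finset.disjoint_left]
      intro a ha hb
      obtain ⟨v, _, rfl⟩ := Finset.mem_image.mp ha
      obtain ⟨w, _, hw⟩ := Finset.mem_image.mp hb
      exact hxy ((Prod.mk.injEq _ _ _ _ ▸ hw.symm).2)
  have step3 : ∀ idx ∈ R,
      ((Sum.elim (Tset C) (Fset C) idx).filter (fun v => t ≤ v)).card ≤
      (if t ≤ N + 3*M - skey idx then 1 else 0) + (if t ≤ N + 3*M + skey idx + 1 then 1 else 0) := by
    intro idx _
    cases idx with
    | inl k =>
        calc ((Tset C k).filter (fun v => t ≤ v)).card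
            ≤ (({N + 3*M - k.val, N + 3*M + k.val + 1} : Finset ℕ).filter (fun v => t ≤ v)).card :=
              Finset.card_le_card (Tset_filter_subset C k t ht)
          _ ≤ _ := pair_filter_card _ _ _
    | inr k =>
        calc ((Fset C k).filter (fun v => t ≤ v)).card
            ≤ (({N + 3*M - k.val, N + 3*M + k.val + 1} : Finset ℕ).filter (fun v => t ≤ v)).card :=
              Finset.card_le_card (Fset_filter_subset C k t ht)
          _ ≤ _ := pair_filter_card _ _ _
  calc (Finset.Icc t (2*N + 3*M)).card ≤ Dom.card := step1
    _ = _ := step2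
    _ ≤ ∑ idx ∈ R, ((if t ≤ N + 3*M - skey idx then 1 else 0)
          + (if t ≤ N + 3*M + skey idx + 1 then 1 else 0)) := Finset.sum_le_sum step3
    _ = (∑ idx ∈ R, if t ≤ N + 3*M - skey idx then 1 else 0)
          + (∑ idx ∈ R, if t ≤ N + 3*M + skey idx + 1 then 1 else 0) := Finset.sum_add_distrib
    _ = _ := by rw [← Finset.card_filter, ← Finset.card_filter]

/-- Suppose `R` selects indices into the family `(T_1,…,T_N,F_1,…,F_N)` with `|R| ≤ N`,
and `f` is a surjection from the disjoint union of the selected sets onto `{1,…,2N+3M}`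
with `f (v,i) ≤ v` for every element. Then for every `i`, `R` selects exactly one of
`T_i` and `F_i`. -/
theorem stmt_2 {N M : ℕ} (C : Fin M → Finset (Bool × Fin N))
    (hsize : ∀ j, (C j).card ≤ 3)
    (R : Finset (Fin N ⊕ Fin N))
    (hR : R.card ≤ N)
    (f : {p : ℕ × (Fin N ⊕ Fin N) // p.2 ∈ R ∧ p.1 ∈ Sum.elim (Tset C) (Fset C) p.2} →
      {u : ℕ // u ∈ Finset.Icc 1 (2*N + 3*M)})
    (hsurj : Function.Surjective f)
    (hle : ∀ p, (f p : ℕ) ≤ p.1.1) :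
    ∀ i : Fin N, Xor' (Sum.inl i ∈ R) (Sum.inr i ∈ R) := by
  intro i
  classical
  have hN : 0 < N := i.pos
  have hH : ∀ m : ℕ, N - m ≤ (R.filter (fun idx => m ≤ skey idx)).card := by
    intro m
    have ht : 3*M < N + 3*M + m + 1 := by omega
    have h := count_lemma C hN R f hsurj hle (N + 3*M + m + 1) ht
    have hcard : (Finset.Icc (N + 3*M + m + 1) (2*N + 3*M)).card = N - m := by
      rw [Nat.card_Icc]; omega
    have h1 : (R.filter (fun idx => N + 3*M + m + 1 ≤ N + 3*M - skey idx)).card = 0 := by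
      rw [Finset.card_eq_zero, Finset.filter_eq_empty_iff]
      intro idx _
      have := Nat.sub_le (N + 3*M) (skey idx)
      omega
    have h2 : (R.filter (fun idx => N + 3*M + m + 1 ≤ N + 3*M + skey idx + 1)) =
        R.filter (fun idx => m ≤ skey idx) := by
      apply Finset.filter_congr
      intro idx _
      omega
    rw [hcard, h2] at h
    omega
  have hL : ∀ m : ℕ, m ≤ N → m ≤ (R.filter (fun idx => skey idx < m)).card := by
    intro m hm
    rcases Nat.eq_zero_or_pos m with rfl | hm0
    · omega
    have ht : 3*M < N + 3*M + 1 - m := by omega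
    have h := count_lemma C hN R f hsurj hle (N + 3*M + 1 - m) ht
    have hcard : (Finset.Icc (N + 3*M + 1 - m) (2*N + 3*M)).card = N + m := by
      rw [Nat.card_Icc]; omega
    have h1 : (R.filter (fun idx => N + 3*M + 1 - m ≤ N + 3*M - skey idx)) =
        R.filter (fun idx => skey idx < m) := by
      apply Finset.filter_congr
      intro idx _
      have := skey_lt idx
      omega
    have h2 : (R.filter (fun idx => N + 3*M + 1 - m ≤ N + 3*M + skey idx + 1)) = R := by
      apply Finset.filter_true_of_mem
      intro idx _
      omega
    rw [hcard, h1, h2] at h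
    omega
  have e1 : (R.filter (fun idx => skey idx < i.val + 1)).card +
      (R.filter (fun idx => i.val + 1 ≤ skey idx)).card = R.card := by
    have h0 := Finset.card_filter_add_card_filter_not
      (s := R) (p := fun idx => skey idx < i.val + 1)
    have h1 : R.filter (fun idx => ¬ skey idx < i.val + 1) =
        R.filter (fun idx => i.val + 1 ≤ skey idx) := by
      apply Finset.filter_congr
      intro x _
      omega
    rw [h1] at h0
    exact h0
  have e2 : (R.filter (fun idx => skey idx < i.val)).card +
      (R.filter (fun idx => i.val ≤ skey idx)).card = R.card := by
    have h0 := Finset.card_filter_add_card_filter_not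
      (s := R) (p := fun idx => skey idx < i.val)
    have h1 : R.filter (fun idx => ¬ skey idx < i.val) =
        R.filter (fun idx => i.val ≤ skey idx) := by
      apply Finset.filter_congr
      intro x _
      omega
    rw [h1] at h0
    exact h0
  have A1 : i.val + 1 ≤ (R.filter (fun idx => skey idx < i.val + 1)).card :=
    hL (i.val + 1) i.isLt
  have A2 : i.val ≤ (R.filter (fun idx => skey idx < i.val)).card :=
    hL i.val (le_of_lt i.isLt)
  have B1 := hH (i.val + 1)
  have B2 := hH i.val
  have hsplit : R.filter (fun idx => skey idx < i.val + 1) =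
      R.filter (fun idx => skey idx < i.val) ∪ R.filter (fun idx => skey idx = i.val) := by
    rw [← Finset.filter_or]
    apply Finset.filter_congr
    intro x _
    omega
  have hdisj : Disjoint (R.filter (fun idx => skey idx < i.val))
      (R.filter (fun idx => skey idx = i.val)) := by
    rw [Finset.disjoint_left]
    intro x hx hy
    rw [Finset.mem_filter] at hx hy
    omega
  have hsum : (R.filter (fun idx => skey idx < i.val + 1)).card =
      (R.filter (fun idx => skey idx < i.val)).card +
      (R.filter (fun idx => skey idx = i.val)).card := by
    rw [hsplit, Finset.card_union_of_disjoint hdisj]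
  have hone : (R.filter (fun idx => skey idx = i.val)).card = 1 := by
    have hi := i.isLt
    omega
  obtain ⟨a, ha⟩ := Finset.card_eq_one.mp hone
  have hmem : ∀ x : Fin N ⊕ Fin N, (x ∈ R ∧ skey x = i.val) ↔ x = a := by
    intro x
    constructor
    · intro hx
      have h' : x ∈ R.filter (fun idx => skey idx = i.val) := Finset.mem_filter.mpr hx
      rw [ha] at h'
      exact Finset.mem_singleton.mp h'
    · rintro rfl
      have h' : x ∈ R.filter (fun idx => skey idx = i.val) := by
        rw [ha]; exact Finset.mem_singleton_self x
      exact Finset.mem_filter.mp h'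
  have hia : a = Sum.inl i ∨ a = Sum.inr i := by
    have haf : a ∈ R.filter (fun idx => skey idx = i.val) := by
      rw [ha]; exact Finset.mem_singleton_self a
    rw [Finset.mem_filter] at haf
    cases a with
    | inl k =>
        left
        have : k.val = i.val := haf.2
        exact congrArg Sum.inl (Fin.ext this)
    | inr k =>
        right
        have : k.val = i.val := haf.2
        exact congrArg Sum.inr (Fin.ext this)
  rcases hia with rfl | rfl
  · refine Or.inl ⟨((hmem _).mpr rfl).1, ?_⟩
    intro hinr
    have : Sum.inr i = Sum.inl i := (hmem (Sum.inr i)).mp ⟨hinr, rfl⟩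
    exact Sum.inr_ne_inl this
  · refine Or.inr ⟨((hmem _).mpr rfl).1, ?_⟩
    intro hinl
    have : Sum.inl i = Sum.inr i := (hmem (Sum.inl i)).mp ⟨hinl, rfl⟩
    exact Sum.inl_ne_inr this
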